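/- Let L > 0 and d_L = arccos(√(2/(1 + √(1 + (2π/L)²)))). For 0 ≤ y ≤ d_L set x₀ = arsinh(L/(π·cos y)) and x₁ = log((1 + cos y)/sin y) (for 0 < y). Then cosh(x₁ − x₀) = (1/sin y)·(√(1 + (L/(π cos y))²) − L/π), and this quantity is monotonically decreasing in y on (0, d_L]. -/

import Mathlib

open Real Set

private lemma aux_core (L c s t S : ℝ) (hL : 0 < L) (hc : 0 < c) (hs : 0 < s)
    (hsc : s^2+c^2=1) (ht : 0 < t) (htc : π * c * t = L) (hS0 : 0 < S) (hS2 : S^2 = 1+t^2) :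
    ((1+c)/s/(t+S) + ((1+c)/s/(t+S))⁻¹)/2 = 1/s*(S - L/π) := by
  have hπ : (0:ℝ) < π := Real.pi_pos
  have hts : 0 < t + S := by linarith
  have h1c : 0 < 1 + c := by linarith
  field_simp
  linear_combination (-2*(1+c)*(t+S)) * htc
    + (-π*(1+c)^2) * hS2 + (π*(t+S)^2) * hsc

private lemma aux_eq (L : ℝ) (hL : 0 < L) (y : ℝ) (hs : 0 < Real.sin y)
    (hc : 0 < Real.cos y) :
    Real.cosh (Real.log ((1 + Real.cos y) / Real.sin y)
        - Real.arsinh (L / (π * Real.cos y)))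
      = (1 / Real.sin y) * (Real.sqrt (1 + (L / (π * Real.cos y)) ^ 2) - L / π) := by
  have hπ : (0:ℝ) < π := Real.pi_pos
  have h1c : 0 < 1 + Real.cos y := by linarith
  have hA : 0 < (1 + Real.cos y) / Real.sin y := by positivity
  rw [Real.cosh_eq, Real.exp_sub, Real.exp_neg, Real.exp_sub, Real.exp_log hA,
    Real.exp_arsinh]
  exact aux_core L (Real.cos y) (Real.sin y) (L / (π * Real.cos y))
    (Real.sqrt (1 + (L / (π * Real.cos y)) ^ 2)) hL hc hs (Real.sin_sq_add_cos_sq y)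
    (by positivity) (by field_simp) (Real.sqrt_pos.2 (by positivity))
    (Real.sq_sqrt (by positivity))

private lemma aux_deriv (L : ℝ) (hL : 0 < L) (x : ℝ) (hs : 0 < Real.sin x)
    (hc : 0 < Real.cos x) (hkey : L^2 < π^2*(Real.cos x)^4 + L^2*(Real.cos x)^2) :
    DifferentiableAt ℝ (fun y : ℝ =>
      1 / Real.sin y * (Real.sqrt (1 + (L / (π * Real.cos y)) ^ 2) - L / π)) x ∧
    deriv (fun y : ℝ =>
      1 / Real.sin y * (Real.sqrt (1 + (L / (π * Real.cos y)) ^ 2) - L / π)) x ≤ 0 := by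
  have hπ : (0:ℝ) < π := Real.pi_pos
  have hpc : π * Real.cos x ≠ 0 := by positivity
  have hin0 : (1 : ℝ) + (L / (π * Real.cos x)) ^ 2 ≠ 0 := by positivity
  have h1 : HasDerivAt (fun y : ℝ => π * Real.cos y) (π * -Real.sin x) x :=
    (Real.hasDerivAt_cos x).const_mul π
  have h2 : HasDerivAt (fun y : ℝ => L / (π * Real.cos y))
      ((0 * (π * Real.cos x) - L * (π * -Real.sin x)) / (π * Real.cos x) ^ 2) x :=
    (hasDerivAt_const x L).div h1 hpc
  have h3 := ((h2.pow 2).const_add 1).sqrt hin0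
  have h4 := h3.sub_const (L / π)
  have h5 : HasDerivAt (fun y : ℝ => 1 / Real.sin y)
      ((0 * Real.sin x - 1 * Real.cos x) / Real.sin x ^ 2) x :=
    (hasDerivAt_const x 1).div (Real.hasDerivAt_sin x) (ne_of_gt hs)
  have h6 := h5.mul h4
  refine ⟨h6.differentiableAt, ?_⟩
  rw [show deriv (fun y : ℝ =>
      1 / Real.sin y * (Real.sqrt (1 + (L / (π * Real.cos y)) ^ 2) - L / π)) x = _ from h6.deriv]
  simp only [Pi.pow_apply]
  have hS2 : (Real.sqrt (1 + (L / (π * Real.cos x)) ^ 2))^2 = 1 + (L / (π * Real.cos x)) ^ 2 :=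
    Real.sq_sqrt (by positivity)
  set c := Real.cos x with hcdef
  set s := Real.sin x with hsdef
  set S := Real.sqrt (1 + (L / (π * c)) ^ 2) with hSdef
  have hS0 : 0 < S := Real.sqrt_pos.2 (by positivity)
  have hc1 : c ≤ 1 := hcdef ▸ Real.cos_le_one x
  have hw : 0 < π^2*c^4 + L^2*c^2 - L^2 := by linarith
  have hP : 0 < π^2*c^4 + L^2*(2*c^2 - 1) := by
    nlinarith [mul_pos (mul_pos hL hL) (mul_pos hc hc)]
  have hsq : (π*L*c^4*S)^2 = π^2*L^2*c^8 + L^4*c^6 := by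
    rw [mul_pow, hS2]; field_simp
  have hQ : (π*L*c^4*S)^2 ≤ (π^2*c^4 + L^2*(2*c^2-1))^2 := by
    rw [hsq]
    have h3 : (0:ℝ) < 2 - c^2 := by nlinarith [hc, hc1]
    have h2 : 0 < π^2*c^4 + L^2*c^2 - L^2 + L^2*c^2*(2-c^2) := by
      nlinarith [hw, mul_pos (mul_pos (mul_pos hL hL) (mul_pos hc hc)) h3]
    nlinarith [mul_pos hw h2]
  have hKI : π*L*c^4*S ≤ π^2*c^4 + L^2*(2*c^2-1) := by
    nlinarith [hQ, hP, (show 0 ≤ π*L*c^4*S by positivity),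
      sq_nonneg (π*L*c^4*S - (π^2*c^4 + L^2*(2*c^2-1)))]
  refine le_of_eq_of_le (?_ : _ = (π*L*c^4*S - (π^2*c^4 + L^2*(2*c^2-1))) / (π^2*c^3*s^2*S)) ?_
  · have hsc : s^2 + c^2 = 1 := Real.sin_sq_add_cos_sq x
    have hS2' : π^2*c^2*S^2 = π^2*c^2 + L^2 := by
      rw [hS2]; field_simp
    push_cast
    field_simp
    linear_combination (-c^2) * hS2' + L^2 * hsc
  · apply div_nonpos_of_nonpos_of_nonneg
    · linarith [hKI]
    · positivity

set_option maxHeartbeats 1000000 in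
theorem cosh_x1_sub_x0_eq_and_antitone (L : ℝ) (hL : 0 < L) :
    (∀ y ∈ Ioc 0 (Real.arccos (Real.sqrt (2 / (1 + Real.sqrt (1 + (2 * π / L) ^ 2))))),
      Real.cosh (Real.log ((1 + Real.cos y) / Real.sin y)
          - Real.arsinh (L / (π * Real.cos y)))
        = (1 / Real.sin y) * (Real.sqrt (1 + (L / (π * Real.cos y)) ^ 2) - L / π)) ∧
    AntitoneOn (fun y : ℝ =>
        Real.cosh (Real.log ((1 + Real.cos y) / Real.sin y)
          - Real.arsinh (L / (π * Real.cos y))))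
      (Ioc 0 (Real.arccos (Real.sqrt (2 / (1 + Real.sqrt (1 + (2 * π / L) ^ 2)))))) := by
  have hπ : (0:ℝ) < π := Real.pi_pos
  have hr2 : (Real.sqrt (1 + (2*π/L)^2))^2 = 1 + (2*π/L)^2 := Real.sq_sqrt (by positivity)
  set r := Real.sqrt (1 + (2*π/L)^2) with hrdef
  have hr0 : 0 < r := Real.sqrt_pos.2 (by positivity)
  have h4 : 0 < (2*π/L)^2 := by positivity
  have hr1 : 1 < r := by nlinarith [hr2, h4, hr0]
  have hθ2 : (Real.sqrt (2/(1+r)))^2 = 2/(1+r) := Real.sq_sqrt (by positivity)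
  set θ := Real.sqrt (2/(1+r)) with hθdef
  have hθpos : 0 < θ := Real.sqrt_pos.2 (by positivity)
  have hθlt1 : θ < 1 := by
    have h2 : 2/(1+r) < 1 := by rw [div_lt_one (by linarith)]; linarith
    nlinarith
  have hkey0 : π^2*(θ^2)^2 + L^2*θ^2 = L^2 := by
    rw [hθ2]
    have hr2' : L^2 * r^2 = L^2 + 4*π^2 := by
      field_simp at hr2 ⊢; linarith [hr2]
    field_simp
    nlinarith [hr2']
  set d := Real.arccos θ with hddef
  have hd0 : 0 < d := Real.arccos_pos.2 hθlt1
  have hdlt : d < π/2 := Real.arccos_lt_pi_div_two.2 hθpos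
  have hcosd : Real.cos d = θ := Real.cos_arccos (by linarith) hθlt1.le
  have hmem : ∀ y ∈ Ioc (0:ℝ) d, 0 < Real.sin y ∧ 0 < Real.cos y := by
    intro y hy
    refine ⟨Real.sin_pos_of_pos_of_lt_pi hy.1 (by nlinarith [hy.2]), ?_⟩
    exact Real.cos_pos_of_mem_Ioo ⟨by linarith [hy.1], by linarith [hy.2]⟩
  have heq : ∀ y ∈ Ioc (0:ℝ) d,
      Real.cosh (Real.log ((1 + Real.cos y) / Real.sin y)
          - Real.arsinh (L / (π * Real.cos y)))
        = (1 / Real.sin y) * (Real.sqrt (1 + (L / (π * Real.cos y)) ^ 2) - L / π) := by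
    intro y hy
    obtain ⟨hs, hc⟩ := hmem y hy
    exact aux_eq L hL y hs hc
  refine ⟨heq, ?_⟩
  have hganti : AntitoneOn (fun y : ℝ =>
      1 / Real.sin y * (Real.sqrt (1 + (L / (π * Real.cos y)) ^ 2) - L / π)) (Ioc 0 d) := by
    apply antitoneOn_of_deriv_nonpos (convex_Ioc 0 d)
    · apply ContinuousOn.mul
      · exact continuousOn_const.div Real.continuous_sin.continuousOn
          (fun y hy => (hmem y hy).1.ne')
      · refine ContinuousOn.sub (ContinuousOn.sqrt ?_) continuousOn_const
        refine continuousOn_const.add (ContinuousOn.pow ?_ 2)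
        exact continuousOn_const.div
          (continuousOn_const.mul Real.continuous_cos.continuousOn)
          (fun y hy => by have := (hmem y hy).2; positivity)
    · rw [interior_Ioc]
      intro x hx
      have hx' : x ∈ Ioc (0:ℝ) d := ⟨hx.1, hx.2.le⟩
      obtain ⟨hs, hc⟩ := hmem x hx'
      have hcd : θ < Real.cos x := by
        rw [← hcosd]
        exact Real.cos_lt_cos_of_nonneg_of_le_pi hx.1.le (by linarith) hx.2
      have hc2 : θ^2 < (Real.cos x)^2 := by nlinarith
      have hkey : L^2 < π^2*(Real.cos x)^4 + L^2*(Real.cos x)^2 := by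
        nlinarith [hkey0, mul_pos (mul_pos hπ hπ)
          (mul_pos (sub_pos.2 hc2) (show 0 < (Real.cos x)^2+θ^2 by positivity)),
          mul_pos (mul_pos hL hL) (sub_pos.2 hc2)]
      exact (aux_deriv L hL x hs hc hkey).1.differentiableWithinAt
    · rw [interior_Ioc]
      intro x hx
      have hx' : x ∈ Ioc (0:ℝ) d := ⟨hx.1, hx.2.le⟩
      obtain ⟨hs, hc⟩ := hmem x hx'
      have hcd : θ < Real.cos x := by
        rw [← hcosd]
        exact Real.cos_lt_cos_of_nonneg_of_le_pi hx.1.le (by linarith) hx.2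
      have hc2 : θ^2 < (Real.cos x)^2 := by nlinarith
      have hkey : L^2 < π^2*(Real.cos x)^4 + L^2*(Real.cos x)^2 := by
        nlinarith [hkey0, mul_pos (mul_pos hπ hπ)
          (mul_pos (sub_pos.2 hc2) (show 0 < (Real.cos x)^2+θ^2 by positivity)),
          mul_pos (mul_pos hL hL) (sub_pos.2 hc2)]
      exact (aux_deriv L hL x hs hc hkey).2
  intro a ha b hb hab
  calc Real.cosh (Real.log ((1 + Real.cos b) / Real.sin b)
          - Real.arsinh (L / (π * Real.cos b)))
      = 1 / Real.sin b * (Real.sqrt (1 + (L / (π * Real.cos b)) ^ 2) - L / π) := heq b hb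
    _ ≤ 1 / Real.sin a * (Real.sqrt (1 + (L / (π * Real.cos a)) ^ 2) - L / π) :=
        hganti ha hb hab
    _ = _ := (heq a ha).symm
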